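/- If there exists a continuous linear functional g on V with f(v) = g(B v) for all v ∈ H (the membrane/shear dominated case), then ‖u^ε‖_H = o(ε), i.e. lim_{ε→0⁺} ε⁻¹ ‖u^ε‖_H = 0. -/

import Mathlib

open RealInnerProductSpace Filter Topology

/-- Auxiliary scalar inequality: the key estimate `s - x² ≤ d2`. -/
lemma stmt_8_aux_key (nn x s d2 : ℝ) (hx0 : 0 ≤ x) (hxs : x ^ 2 ≤ s)
    (hsx : s ≤ nn * x) (hslow : nn ^ 2 - d2 ≤ s) : s - x ^ 2 ≤ d2 := by
  nlinarith [sq_nonneg (nn - x)]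

/-- Auxiliary scalar inequality: square root bound. -/
lemma stmt_8_aux_sq (a c : ℝ) (h0 : 0 ≤ a) (hc : 0 ≤ c) (h : a ^ 2 ≤ 2 * c ^ 2) :
    a ≤ 2 * c := by
  nlinarith [sq_nonneg (a - 2 * c), sq_nonneg c]

set_option maxHeartbeats 1600000 in
/-- If there exists a continuous linear functional g on V with f(v) = g(B v) for all
v ∈ H (the membrane/shear dominated case), then ‖u^ε‖_H = o(ε),
i.e. lim_{ε→0⁺} ε⁻¹ ‖u^ε‖_H = 0. -/
theorem stmt_8
    {H U V : Type*}
    [NormedAddCommGroup H] [InnerProductSpace ℝ H] [CompleteSpace H]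
    [NormedAddCommGroup U] [InnerProductSpace ℝ U] [CompleteSpace U]
    [NormedAddCommGroup V] [InnerProductSpace ℝ V] [CompleteSpace V]
    (A : H →L[ℝ] U) (B : H →L[ℝ] V)
    (c₁ c₂ : ℝ) (hc₁ : 0 < c₁) (hc₂ : 0 < c₂)
    (hlow : ∀ v : H, c₁ * ‖v‖ ≤ ‖A v‖ + ‖B v‖)
    (hup : ∀ v : H, ‖A v‖ + ‖B v‖ ≤ c₂ * ‖v‖)
    (f : H →L[ℝ] ℝ)
    (u : ℝ → H)
    (hu : ∀ ε : ℝ, 0 < ε → ∀ v : H,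
      ⟪A (u ε), A v⟫ + (ε ^ 2)⁻¹ * ⟪B (u ε), B v⟫ = f v)
    (hms : ∃ g : V →L[ℝ] ℝ, ∀ v : H, f v = g (B v)) :
    Tendsto (fun ε : ℝ => ε⁻¹ * ‖u ε‖) (𝓝[>] 0) (𝓝 0) := by
  obtain ⟨g, hg⟩ := hms
  set g' : V := (InnerProductSpace.toDual ℝ V).symm g with hg'def
  have hgrep : ∀ w : V, g w = ⟪g', w⟫ := fun w =>
    (InnerProductSpace.toDual_symm_apply).symm
  set S : Submodule ℝ V :=
    (LinearMap.range (B : H →ₗ[ℝ] V)).topologicalClosure with hSdef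
  haveI : CompleteSpace S :=
    (Submodule.isClosed_topologicalClosure _).completeSpace_coe
  set h : V := (S.orthogonalProjectionOnto g' : V) with hhdef
  have hmemS : ∀ v : H, B v ∈ S := fun v =>
    Submodule.le_topologicalClosure _ ⟨v, rfl⟩
  have hf : ∀ v : H, f v = ⟪h, B v⟫ := by
    intro v
    have h0 : g' - h ∈ Sᗮ := Submodule.sub_starProjection_mem_orthogonal g'
    have h1 : ⟪B v, g' - h⟫ = 0 := h0 (B v) (hmemS v)
    rw [inner_sub_right, real_inner_comm g' (B v), real_inner_comm h (B v)] at h1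
    have h2 : f v = ⟪g', B v⟫ := by rw [hg v, hgrep]
    rw [h2]
    linarith
  set nn : ℝ := ‖h‖ with hnn
  have hnn0 : 0 ≤ nn := norm_nonneg h
  -- approximation of h by B φ
  have hclose : ∀ δ : ℝ, 0 < δ → ∃ φ : H, ‖B φ - h‖ < δ := by
    intro δ hδ
    have hmemh : h ∈ closure ((LinearMap.range (B : H →ₗ[ℝ] V)) : Set V) := by
      rw [← Submodule.topologicalClosure_coe]
      exact (S.orthogonalProjectionOnto g').2
    rw [Metric.mem_closure_iff] at hmemh
    obtain ⟨y, hy, hdy⟩ := hmemh δ hδ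
    obtain ⟨φ, rfl⟩ := hy
    exact ⟨φ, by rwa [← dist_eq_norm, dist_comm]⟩
  clear_value h S g'
  rw [Metric.tendsto_nhdsWithin_nhds]
  intro η hη
  set δ : ℝ := c₁ * η / 8 with hδdef
  have hδpos : 0 < δ := by positivity
  obtain ⟨φ, hφ⟩ := hclose δ hδpos
  refine ⟨min (δ / (‖A φ‖ + 1)) (c₁ * η / (4 * (nn + 1))), by positivity, ?_⟩
  intro ε hεmem hεd
  have hε : 0 < ε := hεmem
  rw [Real.dist_eq, sub_zero, abs_of_pos hε] at hεd
  have hε1 : ε < δ / (‖A φ‖ + 1) := lt_of_lt_of_le hεd (min_le_left _ _)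
  have hε2 : ε < c₁ * η / (4 * (nn + 1)) := lt_of_lt_of_le hεd (min_le_right _ _)
  have hεA : ε * ‖A φ‖ < δ := by
    rw [lt_div_iff₀ (by positivity)] at hε1
    have h1 : ε * ‖A φ‖ ≤ ε * (‖A φ‖ + 1) :=
      mul_le_mul_of_nonneg_left (by linarith) hε.le
    linarith
  have hεn : ε * (4 * (nn + 1)) < c₁ * η := by
    rw [lt_div_iff₀ (by positivity)] at hε2
    exact hε2
  set aa : ℝ := ‖A (u ε)‖ with haa
  set b : ℝ := ‖B (u ε)‖ with hbb
  set t : ℝ := ⟪h, B (u ε)⟫ with htt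
  have haa0 : 0 ≤ aa := norm_nonneg _
  have hb0 : 0 ≤ b := norm_nonneg _
  have E1 : aa ^ 2 + (ε ^ 2)⁻¹ * b ^ 2 = t := by
    have h1 := hu ε hε (u ε)
    rw [real_inner_self_eq_norm_sq, real_inner_self_eq_norm_sq, hf] at h1
    exact h1
  set κ : ℝ := (ε ^ 2)⁻¹ with hκ
  have hinv : (0:ℝ) < κ := by rw [hκ]; positivity
  have ei : κ * ε ^ 2 = 1 := inv_mul_cancel₀ (by positivity)
  have tb : t ≤ nn * b := real_inner_le_norm h (B (u ε))
  -- bound on b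
  have hbbound : b ≤ nn * ε ^ 2 := by
    have k1 : κ * b ^ 2 ≤ nn * b := by linarith [sq_nonneg aa]
    have k2 : b * b ≤ (nn * ε ^ 2) * b := by
      have k3 := mul_le_mul_of_nonneg_right k1 (le_of_lt (pow_pos hε 2))
      have k4 : κ * b ^ 2 * ε ^ 2 = b * b := by
        linear_combination (b * b) * ei
      linarith
    rcases hb0.eq_or_lt with h' | h'
    · rw [← h']
      positivity
    · exact le_of_mul_le_mul_right k2 h'
  -- minimization inequality: 0 ≤ a(w,w) with w = u ε - ε² φ
  have E2 : ⟪A (u ε), A φ⟫ + κ * ⟪B (u ε), B φ⟫ = ⟪h, B φ⟫ := by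
    have h1 := hu ε hε φ
    rw [hf] at h1
    exact h1
  have expA : ‖A (u ε) - ε ^ 2 • A φ‖ ^ 2
      = aa ^ 2 - 2 * (ε ^ 2 * ⟪A (u ε), A φ⟫) + (ε ^ 2) ^ 2 * ‖A φ‖ ^ 2 := by
    rw [norm_sub_sq_real, real_inner_smul_right, norm_smul]
    rw [Real.norm_eq_abs, abs_of_pos (by positivity : (0:ℝ) < ε ^ 2)]
    ring
  have expB : ‖B (u ε) - ε ^ 2 • B φ‖ ^ 2
      = b ^ 2 - 2 * (ε ^ 2 * ⟪B (u ε), B φ⟫) + (ε ^ 2) ^ 2 * ‖B φ‖ ^ 2 := by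
    rw [norm_sub_sq_real, real_inner_smul_right, norm_smul]
    rw [Real.norm_eq_abs, abs_of_pos (by positivity : (0:ℝ) < ε ^ 2)]
    ring
  have Ew : (0:ℝ) ≤ ‖A (u ε) - ε ^ 2 • A φ‖ ^ 2
      + κ * ‖B (u ε) - ε ^ 2 • B φ‖ ^ 2 := by
    have hκ0 : (0:ℝ) ≤ κ := hinv.le
    positivity
  rw [expA, expB] at Ew
  have expB2 : κ * (b ^ 2 - 2 * (ε ^ 2 * ⟪B (u ε), B φ⟫) + (ε ^ 2) ^ 2 * ‖B φ‖ ^ 2)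
      = κ * b ^ 2 - 2 * ⟪B (u ε), B φ⟫ + ε ^ 2 * ‖B φ‖ ^ 2 := by
    linear_combination (-2 * ⟪B (u ε), B φ⟫ + ε ^ 2 * ‖B φ‖ ^ 2) * ei
  rw [expB2] at Ew
  have E2' : ε ^ 2 * ⟪A (u ε), A φ⟫ + ⟪B (u ε), B φ⟫ = ε ^ 2 * ⟪h, B φ⟫ := by
    linear_combination ε ^ 2 * E2 - ⟪B (u ε), B φ⟫ * ei
  have E3 : 2 * (ε ^ 2 * ⟪h, B φ⟫) - (ε ^ 2) ^ 2 * ‖A φ‖ ^ 2 - ε ^ 2 * ‖B φ‖ ^ 2 ≤ t := by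
    linarith [Ew, E1, E2']
  have h4 : 2 * ⟪h, B φ⟫ - ‖B φ‖ ^ 2 = nn ^ 2 - ‖B φ - h‖ ^ 2 := by
    have h5 := norm_sub_sq_real (B φ) h
    rw [real_inner_comm h (B φ)] at h5
    rw [← hnn] at h5
    linarith
  -- scaled bound: κ * t ≥ nn² - 2δ²
  have hslow : nn ^ 2 - 2 * δ ^ 2 ≤ κ * t := by
    have h5 := mul_le_mul_of_nonneg_left E3 hinv.le
    have h6 : κ * (2 * (ε ^ 2 * ⟪h, B φ⟫) - (ε ^ 2) ^ 2 * ‖A φ‖ ^ 2 - ε ^ 2 * ‖B φ‖ ^ 2)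
        = 2 * ⟪h, B φ⟫ - ε ^ 2 * ‖A φ‖ ^ 2 - ‖B φ‖ ^ 2 := by
      linear_combination (2 * ⟪h, B φ⟫ - ε ^ 2 * ‖A φ‖ ^ 2 - ‖B φ‖ ^ 2) * ei
    rw [h6] at h5
    have h7 : ε ^ 2 * ‖A φ‖ ^ 2 < δ ^ 2 := by
      have h7' := mul_lt_mul'' hεA hεA (by positivity) (by positivity)
      linarith [h7']
    have h8 : ‖B φ - h‖ ^ 2 < δ ^ 2 := by
      have h8' := mul_lt_mul'' hφ hφ (norm_nonneg _) (norm_nonneg _)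
      linarith [h8']
    linarith
  have hxs : (κ * b) ^ 2 ≤ κ * t := by
    have h9 : κ * aa ^ 2 + κ ^ 2 * b ^ 2 = κ * t := by linear_combination κ * E1
    linarith [mul_nonneg hinv.le (sq_nonneg aa), h9]
  have hsx : κ * t ≤ nn * (κ * b) := by
    have h10 := mul_le_mul_of_nonneg_left tb hinv.le
    linarith [h10]
  have hx0 : 0 ≤ κ * b := mul_nonneg hinv.le hb0
  -- key: κt - (κb)² ≤ 2δ²
  have hkey : κ * t - (κ * b) ^ 2 ≤ 2 * δ ^ 2 :=
    stmt_8_aux_key nn (κ * b) (κ * t) (2 * δ ^ 2) hx0 hxs hsx (by linarith)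
  -- bound on aa
  have h11 : aa ^ 2 = ε ^ 2 * (κ * t - (κ * b) ^ 2) := by
    linear_combination E1 + (κ * b ^ 2 - t) * ei
  have haabound : aa ≤ 2 * (δ * ε) := by
    refine stmt_8_aux_sq aa (δ * ε) haa0 (by positivity) ?_
    have h12 := mul_le_mul_of_nonneg_left hkey (sq_nonneg ε)
    linarith [h12, h11]
  -- conclude
  rw [Real.dist_eq, sub_zero, abs_of_nonneg (by positivity)]
  rw [inv_mul_lt_iff₀ hε]
  have hl := hlow (u ε)
  have hcu : c₁ * ‖u ε‖ ≤ 2 * (δ * ε) + nn * ε ^ 2 := by linarith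
  have hεn2 : ε * (4 * (nn + 1)) * ε < c₁ * η * ε := mul_lt_mul_of_pos_right hεn hε
  have hfin : c₁ * ‖u ε‖ < c₁ * (ε * η) := by
    rw [hδdef] at hcu
    linarith [hεn2, mul_pos hε hε, mul_pos (mul_pos hc₁ hη) hε, hcu]
  have hend := lt_of_mul_lt_mul_left hfin hc₁.le
  linarith
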